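/- Let μ ∈ ℝ^n, λ > 0, α ≥ 0, and suppose s := sqrt( Σ_{i=1}^n ((λ|μ_i| − α)₊)² ) > 0, where x₊ = max{0, x}. Define f* ∈ ℝ^n by f*_i = sign(μ_i)(λ|μ_i| − α)₊ / s. Then ‖f*‖₂ = 1 and f* minimizes the convex function f ↦ α‖f‖₁ − λ⟨f, μ⟩ over the Euclidean unit ball {f ∈ ℝ^n : ‖f‖₂ ≤ 1}. -/

import Mathlib

open Finset

/-- Closed-form solution of the inner problem of the IPM for sparse PCA: the vector
`f*_i = sign(μ_i)(λ|μ_i| − α)₊ / s` with `s = sqrt(Σ_i ((λ|μ_i| − α)₊)²)` has unit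
Euclidean norm and minimizes `f ↦ α‖f‖₁ − λ⟨f, μ⟩` over the Euclidean unit ball. -/
theorem sparse_pca_inner_closed_form (n : ℕ) (μ : Fin n → ℝ) (lam α : ℝ)
    (hlam : 0 < lam) (hα : 0 ≤ α)
    (hs : 0 < Real.sqrt (∑ i, (max 0 (lam * |μ i| - α)) ^ 2))
    (fstar : Fin n → ℝ)
    (hf : ∀ i, fstar i = Real.sign (μ i) * max 0 (lam * |μ i| - α) /
      Real.sqrt (∑ j, (max 0 (lam * |μ j| - α)) ^ 2)) :
    Real.sqrt (∑ i, (fstar i) ^ 2) = 1 ∧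
    ∀ f : Fin n → ℝ, (∑ i, (f i) ^ 2) ≤ 1 →
      α * (∑ i, |fstar i|) - lam * (∑ i, fstar i * μ i) ≤
        α * (∑ i, |f i|) - lam * (∑ i, f i * μ i) := by
  set m : Fin n → ℝ := fun i => max 0 (lam * |μ i| - α) with hm
  set S : ℝ := ∑ i, (m i) ^ 2 with hS
  set s : ℝ := Real.sqrt S with hsdef
  have hSnn : 0 ≤ S := Finset.sum_nonneg fun i _ => sq_nonneg _
  have hSpos : 0 < S := by
    by_contra h
    push_neg at h
    have : S = 0 := le_antisymm h hSnn
    rw [hsdef, this, Real.sqrt_zero] at hs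
    exact lt_irrefl 0 hs
  have hspos : 0 < s := hs
  have hs2 : s ^ 2 = S := Real.sq_sqrt hSnn
  have hmnn : ∀ i, 0 ≤ m i := fun i => le_max_left _ _
  -- key pointwise facts
  have habs : ∀ i, |fstar i| = m i / s := by
    intro i
    rw [hf i]
    by_cases h0 : μ i = 0
    · have : m i = 0 := by
        simp [hm, h0, hα, max_eq_left, sub_nonpos]
      simp [this, h0]
    · have hsign : |Real.sign (μ i)| = 1 := by
        rcases lt_or_gt_of_ne h0 with h | h
        · rw [Real.sign_of_neg h]; norm_num
        · rw [Real.sign_of_pos h]; norm_num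
      rw [abs_div, abs_mul, hsign, one_mul, abs_of_nonneg (hmnn i),
        abs_of_pos hspos]
  have hmul : ∀ i, fstar i * μ i = m i * |μ i| / s := by
    intro i
    rw [hf i]
    by_cases h0 : μ i = 0
    · have : m i = 0 := by
        simp [hm, h0, hα, max_eq_left, sub_nonpos]
      simp [this, h0]
    · have : Real.sign (μ i) * μ i = |μ i| := by
        rcases lt_or_gt_of_ne h0 with h | h
        · rw [Real.sign_of_neg h, abs_of_neg h]; ring
        · rw [Real.sign_of_pos h, abs_of_pos h]; ring
      field_simp
      rw [mul_comm (Real.sign (μ i)) (m i), mul_assoc, this]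
      ring
  have hsq : ∀ i, (fstar i) ^ 2 = (m i) ^ 2 / s ^ 2 := by
    intro i
    rw [← sq_abs (fstar i), habs i, div_pow]
  have hmm : ∀ i, m i * (lam * |μ i| - α) = (m i) ^ 2 := by
    intro i
    rcases le_or_gt (lam * |μ i| - α) 0 with h | h
    · have : m i = 0 := max_eq_left h
      simp [this]
    · have : m i = lam * |μ i| - α := max_eq_right h.le
      rw [this]; ring
  constructor
  · have : ∑ i, (fstar i) ^ 2 = 1 := by
      simp only [hsq]
      rw [← Finset.sum_div, ← hS, hs2, div_self (ne_of_gt hSpos)]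
    rw [this, Real.sqrt_one]
  · intro f hfle
    -- value at fstar is -s
    have hval : α * (∑ i, |fstar i|) - lam * (∑ i, fstar i * μ i) = -s := by
      simp only [habs, hmul]
      rw [← Finset.sum_div, ← Finset.sum_div, ← mul_div_assoc, ← mul_div_assoc,
        div_sub_div_same]
      have : α * ∑ i, m i - lam * ∑ i, m i * |μ i| = -S := by
        rw [Finset.mul_sum, Finset.mul_sum, ← Finset.sum_sub_distrib, hS, ← Finset.sum_neg_distrib]
        apply Finset.sum_congr rfl
        intro i _
        have := hmm i
        nlinarith [hmm i]
      rw [this, ← hs2]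
      field_simp
    rw [hval]
    -- lower bound
    have h1 : ∀ i, -( |f i| * m i) ≤ α * |f i| - lam * (f i * μ i) := by
      intro i
      have h2 : lam * (f i * μ i) ≤ lam * (|f i| * |μ i|) := by
        apply mul_le_mul_of_nonneg_left _ hlam.le
        calc f i * μ i ≤ |f i * μ i| := le_abs_self _
          _ = |f i| * |μ i| := abs_mul _ _
      have h3 : lam * |μ i| - α ≤ m i := le_max_right _ _
      nlinarith [abs_nonneg (f i)]
    have h4 : ∑ i, |f i| * m i ≤ s := by
      have hcs : (∑ i, |f i| * m i) ^ 2 ≤ (∑ i, |f i| ^ 2) * S := by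
        rw [hS]
        exact Finset.sum_mul_sq_le_sq_mul_sq Finset.univ _ _
      have hfs : ∑ i, |f i| ^ 2 ≤ 1 := by
        simp only [sq_abs]; exact hfle
      have h5 : (∑ i, |f i| * m i) ^ 2 ≤ S := by
        nlinarith
      have h6 : 0 ≤ ∑ i, |f i| * m i :=
        Finset.sum_nonneg fun i _ => mul_nonneg (abs_nonneg _) (hmnn i)
      nlinarith [hs2, hspos]
    calc -s ≤ -(∑ i, |f i| * m i) := by linarith
      _ = ∑ i, -(|f i| * m i) := by rw [Finset.sum_neg_distrib]
      _ ≤ ∑ i, (α * |f i| - lam * (f i * μ i)) := Finset.sum_le_sum fun i _ => h1 i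
      _ = α * (∑ i, |f i|) - lam * (∑ i, f i * μ i) := by
          rw [Finset.sum_sub_distrib, ← Finset.mul_sum, ← Finset.mul_sum]
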